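/- For every $\epsilon > 0$, the number of pairs $(m_1, m_2)$ of positive integers with $m_1, m_2 \leq M$ such that $m_1 m_2$ is squarefull is $O_\epsilon(M^{1+\epsilon})$. -/

import Mathlib

/-- A positive integer is squarefull (powerful) if every prime dividing it does so to
at least the second power. -/
def IsSquarefull (n : ℕ) : Prop := ∀ p : ℕ, p.Prime → p ∣ n → p ^ 2 ∣ n

lemma poly_le_exp (k : ℕ) : ∃ B : ℕ, 0 < B ∧ ∀ e : ℕ, (e+1)^k ≤ B * 2^e := by
  refine ⟨2^(k+1) * Nat.factorial (k+1) + (2*k+2)^k, by positivity, fun e => ?_⟩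
  rcases le_or_gt e (2*k+1) with he | he
  · have h0 : (e+1)^k ≤ (2*k+2)^k := Nat.pow_le_pow_left (by omega) k
    have h0' : (1:ℕ) ≤ 2^e := Nat.one_le_two_pow
    calc (e+1)^k ≤ (2^(k+1) * Nat.factorial (k+1) + (2*k+2)^k) * 1 := by omega
      _ ≤ (2^(k+1) * Nat.factorial (k+1) + (2*k+2)^k) * 2^e := by
          exact Nat.mul_le_mul_left _ h0'
  · have h1 : (e + 1 - (k+1))^(k+1) ≤ Nat.factorial (k+1) * e.choose (k+1) := by
      rw [← Nat.descFactorial_eq_factorial_mul_choose]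
      exact e.pow_sub_le_descFactorial (k+1)
    have h2 : e.choose (k+1) ≤ 2^e := by
      have hm : k + 1 ∈ Finset.range (e+1) := Finset.mem_range.mpr (by omega)
      have := Finset.single_le_sum (f := fun m => e.choose m)
        (fun i _ => Nat.zero_le _) hm
      calc e.choose (k+1) ≤ ∑ m ∈ Finset.range (e+1), e.choose m := this
        _ = 2^e := Nat.sum_range_choose e
    have h3 : (e+1)^(k+1) ≤ 2^(k+1) * (e + 1 - (k+1))^(k+1) := by
      rw [← Nat.mul_pow]
      exact Nat.pow_le_pow_left (by omega) (k+1)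
    calc (e+1)^k ≤ (e+1)^(k+1) := Nat.pow_le_pow_right (by omega) (by omega)
      _ ≤ 2^(k+1) * (Nat.factorial (k+1) * 2^e) :=
          h3.trans (Nat.mul_le_mul_left _ (h1.trans (Nat.mul_le_mul_left _ h2)))
      _ ≤ (2^(k+1) * Nat.factorial (k+1) + (2*k+2)^k) * 2^e := by
          rw [← mul_assoc]; exact Nat.mul_le_mul_right _ (by omega)

lemma card_divisors_pow_le (k : ℕ) :
    ∃ C : ℕ, 0 < C ∧ ∀ n : ℕ, 1 ≤ n → n.divisors.card ^ k ≤ C * n := by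
  obtain ⟨B, hB, hBe⟩ := poly_le_exp k
  refine ⟨B ^ (2^k), by positivity, fun n hn => ?_⟩
  have hn' : n ≠ 0 := by omega
  have hd : n.divisors.card = ∏ p ∈ n.primeFactors, (n.factorization p + 1) :=
    Nat.card_divisors hn'
  have hprod : ∏ p ∈ n.primeFactors, p ^ n.factorization p = n := by
    rw [← Nat.prod_factorization_eq_prod_primeFactors]
    exact Nat.factorization_prod_pow_eq_self hn'
  have key : n.divisors.card ^ k ≤
      ∏ p ∈ n.primeFactors, ((if p < 2^k then B else 1) * p ^ n.factorization p) := by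
    rw [hd, ← Finset.prod_pow]
    refine Finset.prod_le_prod' fun p hp => ?_
    have hp2 : 2 ≤ p := (Nat.prime_of_mem_primeFactors hp).two_le
    set e := n.factorization p with he
    by_cases hlt : p < 2^k
    · rw [if_pos hlt]
      calc (e+1)^k ≤ B * 2^e := hBe e
        _ ≤ B * p^e := Nat.mul_le_mul_left _ (Nat.pow_le_pow_left hp2 e)
    · rw [if_neg hlt]
      push_neg at hlt
      calc (e+1)^k ≤ (2^e)^k := Nat.pow_le_pow_left (Nat.lt_two_pow_self (n := e)) k
        _ = (2^k)^e := by rw [← pow_mul, ← pow_mul, Nat.mul_comm]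
        _ ≤ p^e := Nat.pow_le_pow_left hlt e
        _ = 1 * p^e := (one_mul _).symm
  rw [Finset.prod_mul_distrib, hprod] at key
  refine key.trans (Nat.mul_le_mul_right _ ?_)
  calc (∏ p ∈ n.primeFactors, if p < 2^k then B else 1)
      = B ^ (n.primeFactors.filter (fun p => p < 2^k)).card := by
        rw [Finset.prod_ite, Finset.prod_const, Finset.prod_const, one_pow, mul_one]
    _ ≤ B ^ (2^k) := by
        refine Nat.pow_le_pow_right hB ?_
        calc (n.primeFactors.filter (fun p => p < 2^k)).card
            ≤ (Finset.range (2^k)).card := Finset.card_le_card (fun p hp => by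
              simp only [Finset.mem_filter] at hp
              exact Finset.mem_range.mpr hp.2)
          _ = 2^k := Finset.card_range _

lemma card_divisors_rpow (δ : ℝ) (hδ : 0 < δ) :
    ∃ C : ℝ, 1 ≤ C ∧ ∀ n : ℕ, 1 ≤ n → (n.divisors.card : ℝ) ≤ C * (n:ℝ) ^ δ := by
  set k := ⌈1/δ⌉₊ with hk
  have hk1 : 1 ≤ k := Nat.one_le_ceil_iff.mpr (by positivity)
  obtain ⟨C₀, hC₀, hC₀e⟩ := card_divisors_pow_le k
  have hC₀1 : (1:ℝ) ≤ (C₀:ℝ) := by exact_mod_cast hC₀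
  refine ⟨(C₀ : ℝ), hC₀1, fun n hn => ?_⟩
  have hn1 : (1:ℝ) ≤ (n:ℝ) := by exact_mod_cast hn
  have hinv : 1/(k:ℝ) ≤ δ := by
    rw [div_le_iff₀ (by exact_mod_cast hk1 : (0:ℝ) < (k:ℝ))]
    have := Nat.le_ceil (1/δ)
    rw [← hk] at this
    calc (1:ℝ) = δ * (1/δ) := by field_simp
      _ ≤ δ * k := by nlinarith [this]
  have hbase : (n.divisors.card : ℝ) ^ (k:ℕ) ≤ (C₀:ℝ) * n := by
    exact_mod_cast hC₀e n hn
  have hd0 : (0:ℝ) ≤ (n.divisors.card : ℝ) := by positivity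
  have hkR : ((k:ℝ)) ≠ 0 := by positivity
  have step1 : (n.divisors.card : ℝ) = (((n.divisors.card : ℝ) ^ (k:ℕ)) : ℝ) ^ (1/(k:ℝ)) := by
    rw [← Real.rpow_natCast (n.divisors.card : ℝ) k, ← Real.rpow_mul hd0]
    rw [mul_one_div, div_self hkR, Real.rpow_one]
  calc (n.divisors.card : ℝ)
      = (((n.divisors.card : ℝ) ^ (k:ℕ)) : ℝ) ^ (1/(k:ℝ)) := step1
    _ ≤ ((C₀:ℝ) * n) ^ (1/(k:ℝ)) := Real.rpow_le_rpow (pow_nonneg hd0 _) hbase (by positivity)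
    _ = (C₀:ℝ) ^ (1/(k:ℝ)) * (n:ℝ) ^ (1/(k:ℝ)) := Real.mul_rpow (by positivity) (by positivity)
    _ ≤ (C₀:ℝ) * (n:ℝ) ^ δ := by
        refine mul_le_mul ?_ ?_ (by positivity) (by linarith)
        · nth_rewrite 2 [← Real.rpow_one (C₀:ℝ)]
          refine Real.rpow_le_rpow_of_exponent_le hC₀1 ?_
          rw [div_le_one (by exact_mod_cast hk1 : (0:ℝ) < (k:ℝ))]
          exact_mod_cast hk1
        · exact Real.rpow_le_rpow_of_exponent_le hn1 hinv

lemma squarefull_decomp {n : ℕ} (hn : 1 ≤ n) (h : IsSquarefull n) :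
    ∃ a c : ℕ, n = a^2 * c ∧ c ∣ a ∧ 1 ≤ a := by
  obtain ⟨c, a, hac, hsq⟩ := Nat.sq_mul_squarefree n
  have ha0 : a ≠ 0 := by
    rintro rfl; simp at hac; omega
  have hc0 : c ≠ 0 := by
    rintro rfl; simp at hac; omega
  refine ⟨a, c, hac.symm, ?_, by omega⟩
  -- every prime of c divides a
  have hpd : ∀ p : ℕ, p.Prime → p ∣ c → p ∣ a := by
    intro p hp hpc
    by_contra hpa
    have hpn : p ∣ n := by
      rw [← hac]; exact hpc.mul_left _
    have hp2 : p^2 ∣ a^2 * c := by rw [hac]; exact h p hp hpn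
    have hcop : Nat.Coprime (p^2) (a^2) :=
      Nat.Coprime.pow _ _ ((Nat.Prime.coprime_iff_not_dvd hp).mpr hpa)
    have : p^2 ∣ c := (Nat.Coprime.dvd_of_dvd_mul_left hcop hp2)
    have := hsq p (by rw [← pow_two]; exact this)
    exact hp.not_isUnit this
  -- squarefree c with all primes dividing a implies c ∣ a
  rw [← Nat.factorization_le_iff_dvd hc0 ha0]
  intro p
  rcases Nat.eq_zero_or_pos (c.factorization p) with h0 | h1
  · simp [h0]
  · have hp : p.Prime := Nat.prime_of_mem_primeFactors
      (Nat.support_factorization c ▸ Finsupp.mem_support_iff.mpr (by omega))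
    have hpc : p ∣ c := Nat.dvd_of_factorization_pos (by omega)
    have hpa := hpd p hp hpc
    have h1' : c.factorization p ≤ 1 := (Nat.squarefree_iff_factorization_le_one hc0).mp hsq p
    have h2' : 1 ≤ a.factorization p :=
      Nat.Prime.factorization_pos_of_dvd hp ha0 hpa
    omega

open scoped Classical in
/-- For every `ε > 0`, the number of ordered pairs `(m₁, m₂)` with `m₁, m₂ ≤ M` and
`m₁ m₂` squarefull is `O_ε(M^{1+ε})`. -/
theorem stmt6 (ε : ℝ) (hε : 0 < ε) :
    ∃ C : ℝ, 0 < C ∧ ∀ M : ℕ, 1 ≤ M →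
      (((Finset.Icc 1 M ×ˢ Finset.Icc 1 M).filter
          (fun mm => IsSquarefull (mm.1 * mm.2))).card : ℝ) ≤ C * (M : ℝ) ^ (1 + ε) := by
  have hδ : 0 < ε/3 := by positivity
  obtain ⟨C₁, hC₁, hC₁e⟩ := card_divisors_rpow (ε/3) hδ
  refine ⟨C₁^2, by positivity, fun M hM => ?_⟩
  set S := (Finset.Icc 1 M ×ˢ Finset.Icc 1 M).filter (fun mm => IsSquarefull (mm.1 * mm.2))
    with hS
  set P := (Finset.Icc 1 (M^2)).filter IsSquarefull with hP
  -- Step A : S.card ≤ ∑ n in P, d(n)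
  have stepA : S.card ≤ ∑ n ∈ P, n.divisors.card := by
    have h1 : S.card ≤ (P.biUnion (fun n => {n} ×ˢ n.divisors)).card := by
      apply Finset.card_le_card_of_injOn (fun mm => (mm.1 * mm.2, mm.1))
      · intro mm hmm
        rw [hS, Finset.mem_coe, Finset.mem_filter, Finset.mem_product, Finset.mem_Icc, Finset.mem_Icc] at hmm
        obtain ⟨⟨⟨h11, h12⟩, h21, h22⟩, hsf⟩ := hmm
        rw [Finset.mem_coe, Finset.mem_biUnion]
        refine ⟨mm.1 * mm.2, ?_, ?_⟩
        · rw [hP, Finset.mem_filter, Finset.mem_Icc]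
          exact ⟨⟨Nat.one_le_iff_ne_zero.mpr (by positivity), by nlinarith⟩, hsf⟩
        · rw [Finset.mem_product]
          exact ⟨Finset.mem_singleton_self _,
            Nat.mem_divisors.mpr ⟨dvd_mul_right _ _, by positivity⟩⟩
      · intro a ha b hb hab
        simp only [hS, Finset.mem_coe, Finset.mem_filter, Finset.mem_product,
          Finset.mem_Icc] at ha hb
        obtain ⟨⟨⟨ha1, _⟩, _⟩, _⟩ := ha
        simp only [Prod.mk.injEq] at hab
        obtain ⟨hm, h1⟩ := hab
        rw [h1] at hm ha1
        exact Prod.ext h1 (Nat.eq_of_mul_eq_mul_left (by omega) hm)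
    refine h1.trans ((Finset.card_biUnion_le).trans (le_of_eq ?_))
    refine Finset.sum_congr rfl fun n hn => ?_
    rw [Finset.card_product, Finset.card_singleton, one_mul]
  -- Step B : P.card ≤ ∑ a in Icc 1 M, d(a)
  have stepB : P.card ≤ ∑ a ∈ Finset.Icc 1 M, a.divisors.card := by
    set f : ℕ → ℕ × ℕ := fun n =>
      if h : 1 ≤ n ∧ IsSquarefull n then
        ⟨(squarefull_decomp h.1 h.2).choose, (squarefull_decomp h.1 h.2).choose_spec.choose⟩
      else (0, 0) with hf
    have hfspec : ∀ n, (h1 : 1 ≤ n) → (h2 : IsSquarefull n) →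
        n = (f n).1 ^ 2 * (f n).2 ∧ (f n).2 ∣ (f n).1 ∧ 1 ≤ (f n).1 := by
      intro n h1 h2
      rw [hf]
      simp only [dif_pos (And.intro h1 h2)]
      obtain ⟨hx, hy, hz⟩ := (squarefull_decomp h1 h2).choose_spec.choose_spec
      exact ⟨hx, hy, hz⟩
    have h1 : P.card ≤ ((Finset.Icc 1 M).biUnion (fun a => {a} ×ˢ a.divisors)).card := by
      apply Finset.card_le_card_of_injOn f
      · intro n hn
        rw [hP, Finset.mem_coe, Finset.mem_filter, Finset.mem_Icc] at hn
        obtain ⟨⟨hn1, hn2⟩, hsf⟩ := hn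
        obtain ⟨heq, hdvd, ha1⟩ := hfspec n hn1 hsf
        rw [Finset.mem_coe, Finset.mem_biUnion]
        have hc1 : 1 ≤ (f n).2 := by
          rcases Nat.eq_zero_or_pos (f n).2 with h0 | h0
          · rw [h0, mul_zero] at heq; omega
          · exact h0
        refine ⟨(f n).1, ?_, ?_⟩
        · rw [Finset.mem_Icc]
          constructor
          · exact ha1
          · nlinarith [heq, hn2, hc1, ha1]
        · rw [Finset.mem_product]
          exact ⟨Finset.mem_singleton_self _, Nat.mem_divisors.mpr ⟨hdvd, by omega⟩⟩
      · intro n hn n' hn' hnn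
        simp only [hP, Finset.mem_coe, Finset.mem_filter, Finset.mem_Icc] at hn hn'
        obtain ⟨heq, _, _⟩ := hfspec n hn.1.1 hn.2
        obtain ⟨heq', _, _⟩ := hfspec n' hn'.1.1 hn'.2
        rw [heq, heq', hnn]
    refine h1.trans ((Finset.card_biUnion_le).trans (le_of_eq ?_))
    refine Finset.sum_congr rfl fun n hn => ?_
    rw [Finset.card_product, Finset.card_singleton, one_mul]
  -- Step C : real estimates
  have hM0 : (0:ℝ) < (M:ℝ) := by exact_mod_cast hM
  have hM1 : (1:ℝ) ≤ (M:ℝ) := by exact_mod_cast hM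
  have hbound2 : ∀ n ∈ P, (n.divisors.card : ℝ) ≤ C₁ * ((M:ℝ)^2) ^ (ε/3) := by
    intro n hn
    rw [hP, Finset.mem_filter, Finset.mem_Icc] at hn
    refine (hC₁e n hn.1.1).trans ?_
    have hcast : (n:ℝ) ≤ (M:ℝ)^2 := by exact_mod_cast hn.1.2
    have := Real.rpow_le_rpow (by positivity) hcast (le_of_lt hδ)
    nlinarith [this, Real.rpow_nonneg (show (0:ℝ) ≤ (n:ℝ) by positivity) (ε/3)]
  have hbound1 : ∀ a ∈ Finset.Icc 1 M, (a.divisors.card : ℝ) ≤ C₁ * (M:ℝ) ^ (ε/3) := by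
    intro a ha
    rw [Finset.mem_Icc] at ha
    refine (hC₁e a ha.1).trans ?_
    have hcast : (a:ℝ) ≤ (M:ℝ) := by exact_mod_cast ha.2
    have := Real.rpow_le_rpow (by positivity) hcast (le_of_lt hδ)
    nlinarith [this, Real.rpow_nonneg (show (0:ℝ) ≤ (a:ℝ) by positivity) (ε/3)]
  have hA : (S.card : ℝ) ≤ (P.card : ℝ) * (C₁ * ((M:ℝ)^2) ^ (ε/3)) := by
    calc (S.card : ℝ) ≤ ((∑ n ∈ P, n.divisors.card : ℕ) : ℝ) := by exact_mod_cast stepA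
      _ = ∑ n ∈ P, (n.divisors.card : ℝ) := by push_cast; ring
      _ ≤ ∑ n ∈ P, C₁ * ((M:ℝ)^2) ^ (ε/3) := Finset.sum_le_sum hbound2
      _ = (P.card : ℝ) * (C₁ * ((M:ℝ)^2) ^ (ε/3)) := by
          rw [Finset.sum_const, nsmul_eq_mul]
  have hB : (P.card : ℝ) ≤ (M:ℝ) * (C₁ * (M:ℝ) ^ (ε/3)) := by
    calc (P.card : ℝ) ≤ ((∑ a ∈ Finset.Icc 1 M, a.divisors.card : ℕ) : ℝ) := by
          exact_mod_cast stepB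
      _ = ∑ a ∈ Finset.Icc 1 M, (a.divisors.card : ℝ) := by push_cast; ring
      _ ≤ ∑ a ∈ Finset.Icc 1 M, C₁ * (M:ℝ) ^ (ε/3) := Finset.sum_le_sum hbound1
      _ = (M:ℝ) * (C₁ * (M:ℝ) ^ (ε/3)) := by
          rw [Finset.sum_const, nsmul_eq_mul, Nat.card_Icc]
          norm_num
  have hfac : (0:ℝ) ≤ C₁ * ((M:ℝ)^2) ^ (ε/3) := by positivity
  have final : (S.card : ℝ) ≤ (M:ℝ) * (C₁ * (M:ℝ) ^ (ε/3)) * (C₁ * ((M:ℝ)^2) ^ (ε/3)) := by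
    refine hA.trans ?_
    exact mul_le_mul_of_nonneg_right hB hfac
  refine final.trans (le_of_eq ?_)
  have h2 : ((M:ℝ)^2) ^ (ε/3) = (M:ℝ) ^ (2 * (ε/3)) := by
    rw [← Real.rpow_natCast (M:ℝ) 2, ← Real.rpow_mul (le_of_lt hM0)]
    norm_num
  rw [h2]
  have h3 : (M:ℝ) = (M:ℝ) ^ (1:ℝ) := (Real.rpow_one _).symm
  nth_rewrite 1 [h3]
  rw [show (1:ℝ) + ε = 1 + ε/3 + 2*(ε/3) by ring, Real.rpow_add hM0, Real.rpow_add hM0]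
  ring
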